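/- For a prime $p \equiv 1 \pmod 3$ with $4p = L^2 + 27M^2$, $L \equiv 1 \pmod 3$ (with the sign of $M$ suitably chosen with respect to the generator $\gamma$), the nine cyclotomic numbers of order 3 are: $(0,0)_3 = (p - 8 + L)/9$; $(0,1)_3 = (1,0)_3 = (2,2)_3 = (2p - 4 - L + 9M)/18$; $(1,1)_3 = (0,2)_3 = (2,0)_3 = (2p - 4 - L - 9M)/18$; $(1,2)_3 = (2,1)_3 = (p + 1 + L)/9$. -/
import Mathlib
open Finset

noncomputable def om : ℂ := ⟨-1/2, Real.sqrt 3 / 2⟩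

lemma om_im : om.im = Real.sqrt 3 / 2 := rfl
lemma om_im_ne : om.im ≠ 0 := by rw [om_im]; positivity

lemma om_rel : om ^ 2 + om + 1 = 0 := by
  have h3 : Real.sqrt 3 * Real.sqrt 3 = 3 := Real.mul_self_sqrt (by norm_num)
  apply Complex.ext <;>
    simp [om, pow_two, Complex.mul_re, Complex.mul_im, Complex.add_re, Complex.add_im] <;>
    nlinarith [h3]

lemma om_sq : om ^ 2 = -1 - om := by linear_combination om_rel
lemma om_cube : om ^ 3 = 1 := by linear_combination (om - 1) * om_rel
lemma om_ne_one : om ≠ 1 := by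
  intro h
  have h2 := om_im_ne
  rw [h] at h2; simp at h2
lemma om_ne_zero : om ≠ 0 := by
  intro h
  have h2 := om_cube
  rw [h] at h2; norm_num at h2
lemma om_sq_ne_one : om ^ 2 ≠ 1 := by
  intro h
  have h1 : om = -2 := by linear_combination -h + om_rel
  have h2 := om_im_ne
  rw [h1] at h2; simp at h2

lemma om_prim : IsPrimitiveRoot om 3 := by
  constructor
  · exact om_cube
  · intro l hl
    have hmod : om ^ (l % 3) = 1 := by rw [← pow_eq_pow_mod l om_cube]; exact hl
    have h3 : l % 3 < 3 := Nat.mod_lt _ (by norm_num)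
    interval_cases h : l % 3
    · omega
    · simp at hmod; exact absurd hmod om_ne_one
    · exact absurd hmod om_sq_ne_one

lemma om_pow_mod (m : ℕ) : om ^ m = om ^ (m % 3) := pow_eq_pow_mod m om_cube

lemma om_pow_eq_iff {m n : ℕ} : om ^ m = om ^ n ↔ m % 3 = n % 3 := by
  constructor
  · intro h
    rw [om_pow_mod m, om_pow_mod n] at h
    exact om_prim.pow_inj (Nat.mod_lt _ (by norm_num)) (Nat.mod_lt _ (by norm_num)) h
  · intro h
    rw [om_pow_mod m, om_pow_mod n, h]

lemma conj_om : (starRingEnd ℂ) om = om ^ 2 := by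
  rw [om_sq]
  apply Complex.ext <;> simp [om] <;> norm_num

/-- extraction of integer coefficients -/
lemma om_coeff {a b c d : ℤ} (h : (a : ℂ) + b * om = c + d * om) : a = c ∧ b = d := by
  have him : (b : ℝ) * om.im = (d : ℝ) * om.im := by
    have := congrArg Complex.im h
    simpa [Complex.add_im, Complex.mul_im] using this
  have hbd : (b : ℝ) = d := mul_right_cancel₀ om_im_ne him
  have hbd' : b = d := by exact_mod_cast hbd
  subst hbd'
  have hre : (a : ℂ) = c := by linear_combination h
  exact ⟨by exact_mod_cast hre, rfl⟩

lemma adjoin_om {z : ℂ} (hz : z ∈ Algebra.adjoin ℤ {om}) : ∃ a b : ℤ, z = a + b * om := by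
  induction hz using Algebra.adjoin_induction with
  | mem x hx => exact ⟨0, 1, by simp at hx; simp [hx]⟩
  | algebraMap r => exact ⟨r, 0, by simp⟩
  | add x y hx hy ihx ihy =>
      obtain ⟨a, b, rfl⟩ := ihx; obtain ⟨c, d, rfl⟩ := ihy
      exact ⟨a + c, b + d, by push_cast; ring⟩
  | mul x y hx hy ihx ihy =>
      obtain ⟨a, b, rfl⟩ := ihx; obtain ⟨c, d, rfl⟩ := ihy
      refine ⟨a * c - b * d, a * d + b * c - b * d, ?_⟩
      push_cast
      linear_combination (b * d : ℂ) * om_sq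

section Chi

variable {p : ℕ} [Fact p.Prime] (γ : ZMod p)

open scoped Classical in
/-- discrete log -/
noncomputable def gind (v : ZMod p) : ℕ :=
  if h : ∃ m : ℕ, γ ^ m = v then h.choose else 0

lemma gind_spec {v : ZMod p} (h : ∃ m : ℕ, γ ^ m = v) : γ ^ gind γ v = v := by
  rw [gind]
  split
  · exact h.choose_spec
  · exact absurd h (by assumption)

noncomputable def chifun (v : ZMod p) : ℂ := if v = 0 then 0 else om ^ gind γ v

variable (hkey : ∀ m n : ℕ, γ ^ m = γ ^ n → om ^ m = om ^ n)
  (hex : ∀ v : ZMod p, v ≠ 0 → ∃ m : ℕ, γ ^ m = v)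

noncomputable def chi (hkey : ∀ m n : ℕ, γ ^ m = γ ^ n → om ^ m = om ^ n)
    (hex : ∀ v : ZMod p, v ≠ 0 → ∃ m : ℕ, γ ^ m = v) : MulChar (ZMod p) ℂ where
  toFun := chifun γ
  map_one' := by
    show chifun γ 1 = 1
    rw [chifun, if_neg one_ne_zero]
    have h1 : γ ^ gind γ 1 = γ ^ 0 := by rw [gind_spec γ ⟨0, pow_zero γ⟩]; exact (pow_zero γ).symm
    rw [hkey _ _ h1, pow_zero]
  map_mul' x y := by
    show chifun γ (x * y) = chifun γ x * chifun γ y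
    rcases eq_or_ne x 0 with rfl | hx
    · simp [chifun]
    rcases eq_or_ne y 0 with rfl | hy
    · simp [chifun]
    have hxy : x * y ≠ 0 := mul_ne_zero hx hy
    rw [chifun, chifun, chifun, if_neg hxy, if_neg hx, if_neg hy, ← pow_add]
    apply hkey
    rw [gind_spec γ (hex _ hxy), pow_add, gind_spec γ (hex _ hx), gind_spec γ (hex _ hy)]
  map_nonunit' a ha := by
    show chifun γ a = 0
    rw [isUnit_iff_ne_zero, not_not] at ha
    simp [chifun, ha]

lemma chi_apply (v : ZMod p) :
    chi γ hkey hex v = if v = 0 then 0 else om ^ gind γ v := rfl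

lemma chi_zero : chi γ hkey hex 0 = 0 := by simp [chi_apply]

lemma chi_pow_gind {v : ZMod p} (hv : v ≠ 0) : chi γ hkey hex v = om ^ gind γ v := by
  simp [chi_apply, hv]

lemma chi_eq_pow_iff {v : ZMod p} (hv : v ≠ 0) (a : ℕ) :
    chi γ hkey hex v = om ^ a ↔ (∃ m : ℕ, γ ^ m = v ∧ m % 3 = a % 3) := by
  rw [chi_pow_gind γ hkey hex hv]
  constructor
  · intro h
    exact ⟨gind γ v, gind_spec γ (hex _ hv), om_pow_eq_iff.mp h⟩
  · rintro ⟨m, hm, hm3⟩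
    have : om ^ gind γ v = om ^ m := hkey _ _ (by rw [gind_spec γ (hex _ hv), hm])
    rw [this, om_pow_eq_iff]
    exact hm3

lemma chi_cube_val {v : ZMod p} (hv : v ≠ 0) : (chi γ hkey hex v) ^ 3 = 1 := by
  rw [chi_pow_gind γ hkey hex hv, ← pow_mul, mul_comm, pow_mul, om_cube, one_pow]

lemma chi_cube : (chi γ hkey hex) ^ 3 = 1 := by
  ext v
  rw [MulChar.pow_apply' _ (by norm_num)]
  have hv : (v : ZMod p) ≠ 0 := v.ne_zero
  rw [chi_cube_val γ hkey hex hv, MulChar.one_apply v.isUnit]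


lemma chi_gamma (hγ0 : γ ≠ 0) : chi γ hkey hex γ = om := by
  rw [chi_pow_gind γ hkey hex hγ0]
  have h := hkey (gind γ γ) 1 (by rw [gind_spec γ (hex _ hγ0), pow_one])
  rw [h, pow_one]

lemma chi_ne_one (hγ0 : γ ≠ 0) : chi γ hkey hex ≠ 1 := by
  intro h
  have h2 := chi_gamma γ hkey hex hγ0
  rw [h, MulChar.one_apply (isUnit_iff_ne_zero.mpr hγ0)] at h2
  exact om_ne_one h2.symm

lemma chi_sq_ne_one (hγ0 : γ ≠ 0) : (chi γ hkey hex) ^ 2 ≠ 1 := by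
  intro h
  have h2 : (chi γ hkey hex ^ 2) γ = om ^ 2 := by
    rw [MulChar.pow_apply' _ two_ne_zero, chi_gamma γ hkey hex hγ0]
  rw [h, MulChar.one_apply (isUnit_iff_ne_zero.mpr hγ0)] at h2
  exact om_sq_ne_one h2.symm

lemma chi_neg_one : chi γ hkey hex (-1) = 1 := by
  have hm1 : (-1 : ZMod p) ≠ 0 := neg_ne_zero.mpr one_ne_zero
  rw [chi_pow_gind γ hkey hex hm1]
  have h2 : om ^ (gind γ (-1) * 2) = om ^ 0 := by
    apply hkey
    rw [pow_mul, gind_spec γ (hex _ hm1), pow_zero]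
    ring
  rw [pow_zero] at h2
  have h3 : (3 : ℕ) ∣ gind γ (-1) * 2 := om_prim.dvd_of_pow_eq_one _ h2
  have h4 : gind γ (-1) % 3 = 0 := by omega
  rw [om_pow_mod, h4, pow_zero]

lemma chi_inv : (chi γ hkey hex)⁻¹ = (chi γ hkey hex) ^ 2 := by
  refine (eq_inv_of_mul_eq_one_left ?_).symm
  rw [← pow_succ]
  exact chi_cube γ hkey hex

lemma conj_chi (v : ZMod p) :
    (starRingEnd ℂ) (chi γ hkey hex v) = (chi γ hkey hex v) ^ 2 := by
  rcases eq_or_ne v 0 with rfl | hv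
  · rw [chi_zero]; simp
  · rw [chi_pow_gind γ hkey hex hv, map_pow, conj_om]
    ring

end Chi

lemma om_pow_3c (c : ℕ) : om ^ (3 * c) = 1 := by
  rw [om_pow_mod]; simp [Nat.mul_mod_right]

lemma geom_delta (c : ℕ) (t : ℂ) (ht : t ^ 3 = 1) :
    (∑ i ∈ Finset.range 3, (t * om ^ (2*c))^i) = if t = om ^ c then 3 else 0 := by
  have h1 : om ^ c * om ^ (2*c) = 1 := by
    rw [← pow_add, show c + 2*c = 3*c by ring, om_pow_3c]
  have hs3 : (t * om ^ (2*c)) ^ 3 = 1 := by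
    rw [mul_pow, ht, one_mul, ← pow_mul, show 2*c*3 = 3*(2*c) by ring, om_pow_3c]
  rw [Finset.sum_range_succ, Finset.sum_range_succ, Finset.sum_range_one]
  by_cases hts : t = om ^ c
  · subst hts
    rw [h1]; norm_num
  · have hs1 : t * om ^ (2*c) ≠ 1 := by
      intro h
      exact hts (mul_right_cancel₀ (pow_ne_zero _ om_ne_zero) (h.trans h1.symm))
    have hfac : (t * om ^ (2*c) - 1) * ((t*om^(2*c))^2 + (t*om^(2*c)) + 1) = 0 := by
      linear_combination hs3
    rcases mul_eq_zero.mp hfac with h | h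
    · exact absurd (by linear_combination h) hs1
    · rw [if_neg hts, pow_zero]; linear_combination h

/-- The cyclotomic number `(a,b)_e` over `F` with respect to a generator `γ`. -/
noncomputable def cycNum {F : Type*} [CommRing F] (γ : F) (e a b : ℕ) : ℕ :=
  Nat.card {v : F // v ≠ 0 ∧ v ≠ -1 ∧ (∃ m : ℕ, γ ^ m = v ∧ m % e = a % e) ∧
    (∃ n : ℕ, γ ^ n = v + 1 ∧ n % e = b % e)}

set_option maxHeartbeats 2000000 in
theorem stmt_17 (p : ℕ) (hp : p.Prime) (hp3 : p % 3 = 1)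
    (γ : ZMod p) (hγ : ∀ x : ZMod p, x ≠ 0 → ∃ m : ℕ, γ ^ m = x) :
    ∃ L M : ℤ, 4 * (p : ℤ) = L ^ 2 + 27 * M ^ 2 ∧ L % 3 = 1 ∧
      9 * (cycNum γ 3 0 0 : ℤ) = (p : ℤ) - 8 + L ∧
      18 * (cycNum γ 3 0 1 : ℤ) = 2 * (p : ℤ) - 4 - L + 9 * M ∧
      18 * (cycNum γ 3 1 0 : ℤ) = 2 * (p : ℤ) - 4 - L + 9 * M ∧
      18 * (cycNum γ 3 2 2 : ℤ) = 2 * (p : ℤ) - 4 - L + 9 * M ∧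
      18 * (cycNum γ 3 1 1 : ℤ) = 2 * (p : ℤ) - 4 - L - 9 * M ∧
      18 * (cycNum γ 3 0 2 : ℤ) = 2 * (p : ℤ) - 4 - L - 9 * M ∧
      18 * (cycNum γ 3 2 0 : ℤ) = 2 * (p : ℤ) - 4 - L - 9 * M ∧
      9 * (cycNum γ 3 1 2 : ℤ) = (p : ℤ) + 1 + L ∧
      9 * (cycNum γ 3 2 1 : ℤ) = (p : ℤ) + 1 + L := by
  classical
  haveI hfact : Fact p.Prime := ⟨hp⟩
  have hp4 : p ≠ 4 := by rintro rfl; norm_num at hp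
  have hp7 : 7 ≤ p := by have := hp.two_le; omega
  -- basic nonzero facts
  have h1ne0 : (1 : ZMod p) ≠ 0 := one_ne_zero
  have hm1ne0 : (-1 : ZMod p) ≠ 0 := neg_ne_zero.mpr one_ne_zero
  have hne01 : (0 : ZMod p) ≠ -1 := fun h => hm1ne0 h.symm
  -- γ is nonzero
  have hγ0 : γ ≠ 0 := by
    obtain ⟨m, hm⟩ := hγ (-1) hm1ne0
    rintro rfl
    rcases Nat.eq_zero_or_pos m with rfl | hm0
    · rw [pow_zero] at hm
      have h2 : ((2 : ℕ) : ZMod p) = 0 := by push_cast; linear_combination hm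
      have := (CharP.cast_eq_zero_iff (ZMod p) p 2).mp h2
      have := Nat.le_of_dvd (by norm_num) this
      omega
    · rw [zero_pow hm0.ne'] at hm
      exact hm1ne0 hm.symm
  -- the order of γ is p - 1
  set γu : (ZMod p)ˣ := Units.mk0 γ hγ0 with hγu
  have hord : orderOf γu = p - 1 := by
    have hmem : ∀ u : (ZMod p)ˣ, u ∈ Subgroup.zpowers γu := by
      intro u
      obtain ⟨m, hm⟩ := hγ u u.ne_zero
      refine Subgroup.mem_zpowers_iff.mpr ⟨(m : ℤ), ?_⟩
      apply Units.ext
      rw [zpow_natCast, Units.val_pow_eq_pow_val]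
      exact hm
    rw [orderOf_eq_card_of_forall_mem_zpowers hmem, Nat.card_eq_fintype_card, ZMod.card_units]
  have hdvd : 3 ∣ p - 1 := by omega
  have hkey : ∀ m n : ℕ, γ ^ m = γ ^ n → om ^ m = om ^ n := by
    intro m n h
    have hu : γu ^ m = γu ^ n := by
      apply Units.ext
      rw [Units.val_pow_eq_pow_val, Units.val_pow_eq_pow_val]
      exact h
    have hmod : m ≡ n [MOD p - 1] := by
      have h2 := pow_eq_pow_iff_modEq.mp hu
      rwa [hord] at h2
    have h3 : m % 3 = n % 3 := hmod.of_dvd hdvd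
    rw [om_pow_mod m, om_pow_mod n, h3]
  set χ : MulChar (ZMod p) ℂ := chi γ hkey hγ with hχdef
  have hχ3 : χ ^ 3 = 1 := chi_cube γ hkey hγ
  have hχ1 : χ ≠ 1 := chi_ne_one γ hkey hγ hγ0
  have hχ2 : χ ^ 2 ≠ 1 := chi_sq_ne_one γ hkey hγ hγ0
  have hχm1 : χ (-1) = 1 := chi_neg_one γ hkey hγ
  have hχ0 : χ 0 = 0 := chi_zero γ hkey hγ
  have hχconj : ∀ v, (starRingEnd ℂ) (χ v) = (χ v) ^ 2 := conj_chi γ hkey hγ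
  -- the ambient finset
  set S : Finset (ZMod p) := univ \ {0, -1} with hSdef
  have hSsum : ∀ F : ZMod p → ℂ, ∑ v ∈ S, F v = (∑ v, F v) - F 0 - F (-1) := by
    intro F
    rw [hSdef, Finset.sum_sdiff_eq_sub (subset_univ _), Finset.sum_pair hne01]
    ring
  have hScard : (S.card : ℂ) = (p : ℂ) - 2 := by
    rw [hSdef, card_sdiff_of_subset (subset_univ _), card_univ, ZMod.card]
    rw [card_insert_of_notMem (by simpa using hne01), card_singleton]
    push_cast [Nat.cast_sub (by omega : 2 ≤ p)]
    ring
  have hχcube : ∀ v : ZMod p, v ≠ 0 → (χ v) ^ 3 = 1 := fun v hv => chi_cube_val γ hkey hγ hv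
  have hmemS : ∀ v : ZMod p, v ∈ S ↔ (v ≠ 0 ∧ v ≠ -1) := by
    intro v
    rw [hSdef]
    simp [Finset.mem_sdiff, Finset.mem_insert, Finset.mem_singleton, not_or]
  -- counting formula
  have hcard : ∀ a b : ℕ,
      (cycNum γ 3 a b : ℂ) = ((S.filter (fun v => χ v = om ^ a ∧ χ (v+1) = om ^ b)).card : ℂ) := by
    intro a b
    congr 1
    rw [cycNum, Nat.card_eq_fintype_card, Fintype.card_subtype]
    apply congrArg
    ext v
    simp only [Finset.mem_filter, Finset.mem_univ, true_and, hmemS v]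
    constructor
    · rintro ⟨hv0, hvm1, h1, h2⟩
      have hv10 : v + 1 ≠ 0 := fun h => hvm1 (by linear_combination h)
      exact ⟨⟨hv0, hvm1⟩, (chi_eq_pow_iff γ hkey hγ hv0 a).mpr h1,
        (chi_eq_pow_iff γ hkey hγ hv10 b).mpr h2⟩
    · rintro ⟨⟨hv0, hvm1⟩, h1, h2⟩
      have hv10 : v + 1 ≠ 0 := fun h => hvm1 (by linear_combination h)
      exact ⟨hv0, hvm1, (chi_eq_pow_iff γ hkey hγ hv0 a).mp h1,
        (chi_eq_pow_iff γ hkey hγ hv10 b).mp h2⟩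
  -- the master sum formula
  have hsum9 : ∀ a b : ℕ, (9 : ℂ) * (cycNum γ 3 a b : ℂ)
      = ∑ i ∈ range 3, ∑ j ∈ range 3, om^(2*a*i) * om^(2*b*j) *
          ∑ v ∈ S, (χ v)^i * (χ (v+1))^j := by
    intro a b
    rw [hcard a b]
    have step1 : ∀ v ∈ S,
        (∑ i ∈ range 3, (χ v * om^(2*a))^i) * (∑ j ∈ range 3, (χ (v+1) * om^(2*b))^j)
          = if χ v = om ^ a ∧ χ (v+1) = om ^ b then 9 else 0 := by
      intro v hv
      obtain ⟨hv0, hvm1⟩ := (hmemS v).mp hv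
      have hv10 : v + 1 ≠ 0 := fun h => hvm1 (by linear_combination h)
      rw [geom_delta a _ (hχcube v hv0), geom_delta b _ (hχcube _ hv10)]
      by_cases h1 : χ v = om ^ a <;> by_cases h2 : χ (v+1) = om ^ b <;>
        simp [h1, h2] <;> norm_num
    have lhs_eq : ∑ v ∈ S,
        (∑ i ∈ range 3, (χ v * om^(2*a))^i) * (∑ j ∈ range 3, (χ (v+1) * om^(2*b))^j)
          = 9 * ((S.filter fun v => χ v = om ^ a ∧ χ (v+1) = om ^ b).card : ℂ) := by
      rw [Finset.sum_congr rfl step1, ← Finset.sum_filter, Finset.sum_const, nsmul_eq_mul]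
      ring
    have expand : ∑ v ∈ S,
        (∑ i ∈ range 3, (χ v * om^(2*a))^i) * (∑ j ∈ range 3, (χ (v+1) * om^(2*b))^j)
          = ∑ i ∈ range 3, ∑ j ∈ range 3, om^(2*a*i) * om^(2*b*j) *
              ∑ v ∈ S, (χ v)^i * (χ (v+1))^j := by
      simp only [Finset.sum_mul_sum]
      rw [Finset.sum_comm]
      refine Finset.sum_congr rfl fun i _ => ?_
      rw [Finset.sum_comm]
      refine Finset.sum_congr rfl fun j _ => ?_
      rw [Finset.mul_sum]
      refine Finset.sum_congr rfl fun v _ => ?_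
      rw [mul_pow, mul_pow, ← pow_mul, ← pow_mul]
      ring
    rw [← lhs_eq, expand]
  -- full-sum values
  have hχinv : χ⁻¹ = χ ^ 2 := chi_inv γ hkey hγ
  have hsum1 : ∑ v : ZMod p, χ v = 0 := MulChar.sum_eq_zero_of_ne_one hχ1
  have hsum2 : ∑ v : ZMod p, (χ v)^2 = 0 := by
    have h : ∀ v : ZMod p, (χ v)^2 = (χ^2) v := fun v => (MulChar.pow_apply' χ two_ne_zero v).symm
    simp only [h]
    exact MulChar.sum_eq_zero_of_ne_one hχ2
  -- the T values
  have hT00 : ∑ v ∈ S, (χ v)^0 * (χ (v+1))^0 = (p : ℂ) - 2 := by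
    simp only [pow_zero, one_mul]
    rw [Finset.sum_const, nsmul_eq_mul, mul_one]
    exact hScard
  have hT10 : ∑ v ∈ S, (χ v)^1 * (χ (v+1))^0 = -1 := by
    simp only [pow_zero, pow_one, mul_one]
    rw [hSsum, hsum1, hχ0, hχm1]
    ring
  have hT20 : ∑ v ∈ S, (χ v)^2 * (χ (v+1))^0 = -1 := by
    simp only [pow_zero, mul_one]
    rw [hSsum, hsum2, hχ0, hχm1]
    norm_num
  have hT01 : ∑ v ∈ S, (χ v)^0 * (χ (v+1))^1 = -1 := by
    simp only [pow_zero, pow_one, one_mul]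
    rw [hSsum]
    rw [Fintype.sum_equiv (Equiv.addRight (1 : ZMod p)) (fun v => χ (v + 1)) (fun w => χ w)
      (fun v => rfl), hsum1]
    norm_num [hχ0, map_one χ]
  have hT02 : ∑ v ∈ S, (χ v)^0 * (χ (v+1))^2 = -1 := by
    simp only [pow_zero, one_mul]
    rw [hSsum]
    rw [Fintype.sum_equiv (Equiv.addRight (1 : ZMod p)) (fun v => (χ (v + 1))^2)
      (fun w => (χ w)^2) (fun v => rfl), hsum2]
    norm_num [hχ0, map_one χ]
  -- Jacobi sum values
  have hTjac : ∀ i j : ℕ, i ≠ 0 → j ≠ 0 →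
      ∑ v ∈ S, (χ v)^i * (χ (v+1))^j = jacobiSum (χ^i) (χ^j) := by
    intro i j hi hj
    rw [hSsum]
    have hb0 : (χ (0:ZMod p))^i * (χ ((0:ZMod p)+1))^j = 0 := by
      rw [hχ0, zero_pow hi, zero_mul]
    have hbm1 : (χ (-1:ZMod p))^i * (χ ((-1:ZMod p)+1))^j = 0 := by
      rw [show (-1 : ZMod p) + 1 = 0 by ring, hχ0, zero_pow hj, mul_zero]
    rw [hb0, hbm1, sub_zero, sub_zero]
    rw [Fintype.sum_equiv (Equiv.neg (ZMod p)) (fun v => (χ v)^i * (χ (v+1))^j)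
      (fun w => (χ (-w))^i * (χ (1-w))^j) (fun v => by simp [neg_neg, sub_neg_eq_add, add_comm])]
    rw [jacobiSum]
    refine Finset.sum_congr rfl fun w _ => ?_
    have hneg : χ (-w) = χ w := by
      rw [show -w = -1 * w by ring, map_mul, hχm1, one_mul]
    rw [hneg, MulChar.pow_apply' χ hi, MulChar.pow_apply' χ hj]
  -- decompose the Jacobi sum
  obtain ⟨x0, y0, hJxy⟩ := adjoin_om (jacobiSum_mem_algebraAdjoin_of_pow_eq_one hχ3 hχ3 om_prim)
  have hconjJ : (starRingEnd ℂ) (jacobiSum χ χ) = (x0:ℂ) + y0 * om^2 := by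
    rw [hJxy, map_add, map_mul, conj_om]
    simp
  have hT11 : ∑ v ∈ S, (χ v)^1 * (χ (v+1))^1 = (x0:ℂ) + y0 * om := by
    rw [hTjac 1 1 one_ne_zero one_ne_zero, pow_one, hJxy]
  have hT22c : jacobiSum (χ^2) (χ^2) = (starRingEnd ℂ) (jacobiSum χ χ) := by
    rw [jacobiSum, jacobiSum, map_sum]
    refine Finset.sum_congr rfl fun v _ => ?_
    rw [map_mul, hχconj, hχconj, MulChar.pow_apply' χ two_ne_zero, MulChar.pow_apply' χ two_ne_zero]
  have hT22 : ∑ v ∈ S, (χ v)^2 * (χ (v+1))^2 = (x0:ℂ) + y0 * om^2 := by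
    rw [hTjac 2 2 two_ne_zero two_ne_zero, hT22c, hconjJ]
  have hT12 : ∑ v ∈ S, (χ v)^1 * (χ (v+1))^2 = -1 := by
    rw [hTjac 1 2 one_ne_zero two_ne_zero, pow_one, ← hχinv, jacobiSum_nontrivial_inv hχ1, hχm1]
  have hT21 : ∑ v ∈ S, (χ v)^2 * (χ (v+1))^1 = -1 := by
    rw [hTjac 2 1 two_ne_zero one_ne_zero, pow_one, jacobiSum_comm, ← hχinv,
      jacobiSum_nontrivial_inv hχ1, hχm1]
  -- the norm identity
  have hnormC : ((x0:ℂ) + y0 * om) * ((x0:ℂ) + y0 * om^2) = (p : ℂ) := by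
    have hrc : ringChar ℂ ≠ ringChar (ZMod p) := by
      rw [ringChar.eq_zero, ZMod.ringChar_zmod_n]
      omega
    have hχχ : χ * χ ≠ 1 := by
      rw [← sq]
      exact hχ2
    have h := jacobiSum_mul_jacobiSum_inv hrc hχ1 hχ1 hχχ
    rw [hχinv, hT22c, hconjJ, hJxy, ZMod.card] at h
    exact h
  have hnormZ : x0^2 - x0*y0 + y0^2 = (p : ℤ) := by
    have h2 : ((x0^2 - x0*y0 + y0^2 : ℤ) : ℂ) = ((p : ℕ) : ℂ) := by
      push_cast
      linear_combination hnormC + (-(x0:ℂ)*y0 - (y0:ℂ)^2*om + (y0:ℂ)^2) * om_rel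
    exact_mod_cast h2
  -- congruence conditions on x0 y0
  obtain ⟨z, hz, hzeq⟩ := exists_jacobiSum_eq_neg_one_add (by norm_num : (2:ℕ) < 3) hχ3 hχ3
    (by rw [ZMod.card]; omega) om_prim
  obtain ⟨c0, d0, hzxy⟩ := adjoin_om hz
  have hcong : (x0 : ℂ) + (y0 : ℂ) * om = ((3*d0 - 1 : ℤ) : ℂ) + ((3*d0 - 3*c0 : ℤ) : ℂ) * om := by
    have h := hJxy.symm.trans hzeq
    rw [hzxy] at h
    push_cast
    linear_combination h + ((c0:ℂ) + (d0:ℂ)*om - 3*(d0:ℂ)) * om_rel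
  obtain ⟨hx0, hy0⟩ := om_coeff hcong
  have Z00 : 9 * (cycNum γ 3 0 0 : ℤ) = (p:ℤ) - 8 + (2*x0 - y0) := by
    have h := hsum9 0 0
    simp only [Finset.sum_range_succ, Finset.sum_range_zero, zero_add] at h
    rw [hT00, hT10, hT20, hT01, hT02, hT11, hT12, hT21, hT22] at h
    have hC : (9:ℂ) * (cycNum γ 3 0 0 : ℂ) = (p:ℂ) - 8 + (2*(x0:ℂ) - (y0:ℂ)) := by
      linear_combination h + (((y0:ℂ))) * om_rel
    have h2 : ((9 * (cycNum γ 3 0 0 : ℤ) : ℤ) : ℂ) = (((p:ℤ) - 8 + (2*x0 - y0) : ℤ) : ℂ) := by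
      push_cast
      linear_combination hC
    exact_mod_cast h2
  have Z01 : 9 * (cycNum γ 3 0 1 : ℤ) = (p:ℤ) - 2 - x0 + 2*y0 := by
    have h := hsum9 0 1
    simp only [Finset.sum_range_succ, Finset.sum_range_zero, zero_add] at h
    rw [hT00, hT10, hT20, hT01, hT02, hT11, hT12, hT21, hT22] at h
    have hC : (9:ℂ) * (cycNum γ 3 0 1 : ℂ) = (p:ℂ) - 2 - (x0:ℂ) + 2*(y0:ℂ) := by
      linear_combination h + (((-2) + (-2)*(y0:ℂ) + (x0:ℂ)) + ((2) + (2)*(y0:ℂ) + (-1)*(x0:ℂ))*om + ((-2) + (x0:ℂ))*om^2 + ((-1)*(y0:ℂ))*om^3 + ((y0:ℂ))*om^4) * om_rel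
    have h2 : ((9 * (cycNum γ 3 0 1 : ℤ) : ℤ) : ℂ) = (((p:ℤ) - 2 - x0 + 2*y0 : ℤ) : ℂ) := by
      push_cast
      linear_combination hC
    exact_mod_cast h2
  have Z10 : 9 * (cycNum γ 3 1 0 : ℤ) = (p:ℤ) - 2 - x0 + 2*y0 := by
    have h := hsum9 1 0
    simp only [Finset.sum_range_succ, Finset.sum_range_zero, zero_add] at h
    rw [hT00, hT10, hT20, hT01, hT02, hT11, hT12, hT21, hT22] at h
    have hC : (9:ℂ) * (cycNum γ 3 1 0 : ℂ) = (p:ℂ) - 2 - (x0:ℂ) + 2*(y0:ℂ) := by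
      linear_combination h + (((-2) + (-2)*(y0:ℂ) + (x0:ℂ)) + ((2) + (2)*(y0:ℂ) + (-1)*(x0:ℂ))*om + ((-2) + (x0:ℂ))*om^2 + ((-1)*(y0:ℂ))*om^3 + ((y0:ℂ))*om^4) * om_rel
    have h2 : ((9 * (cycNum γ 3 1 0 : ℤ) : ℤ) : ℂ) = (((p:ℤ) - 2 - x0 + 2*y0 : ℤ) : ℂ) := by
      push_cast
      linear_combination hC
    exact_mod_cast h2
  have Z22 : 9 * (cycNum γ 3 2 2 : ℤ) = (p:ℤ) - 2 - x0 + 2*y0 := by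
    have h := hsum9 2 2
    simp only [Finset.sum_range_succ, Finset.sum_range_zero, zero_add] at h
    rw [hT00, hT10, hT20, hT01, hT02, hT11, hT12, hT21, hT22] at h
    have hC : (9:ℂ) * (cycNum γ 3 2 2 : ℂ) = (p:ℂ) - 2 - (x0:ℂ) + 2*(y0:ℂ) := by
      linear_combination h + (((-2)*(y0:ℂ) + (x0:ℂ)) + ((2)*(y0:ℂ) + (-1)*(x0:ℂ))*om + ((-2)*(y0:ℂ) + (x0:ℂ))*om^3 + ((-2) + (2)*(y0:ℂ) + (-1)*(x0:ℂ))*om^4 + ((2))*om^5 + ((-2)*(y0:ℂ) + (x0:ℂ))*om^6 + ((-2) + (2)*(y0:ℂ) + (-1)*(x0:ℂ))*om^7 + ((x0:ℂ))*om^8 + ((2) + (-1)*(y0:ℂ))*om^9 + ((-2) + (y0:ℂ) + (-1)*(x0:ℂ))*om^10 + ((x0:ℂ))*om^11 + ((-1)*(y0:ℂ))*om^12 + ((y0:ℂ) + (-1)*(x0:ℂ))*om^13 + ((x0:ℂ))*om^14 + ((-1)*(y0:ℂ))*om^15 + ((y0:ℂ))*om^16) * om_rel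
    have h2 : ((9 * (cycNum γ 3 2 2 : ℤ) : ℤ) : ℂ) = (((p:ℤ) - 2 - x0 + 2*y0 : ℤ) : ℂ) := by
      push_cast
      linear_combination hC
    exact_mod_cast h2
  have Z11 : 9 * (cycNum γ 3 1 1 : ℤ) = (p:ℤ) - 2 - x0 - y0 := by
    have h := hsum9 1 1
    simp only [Finset.sum_range_succ, Finset.sum_range_zero, zero_add] at h
    rw [hT00, hT10, hT20, hT01, hT02, hT11, hT12, hT21, hT22] at h
    have hC : (9:ℂ) * (cycNum γ 3 1 1 : ℂ) = (p:ℂ) - 2 - (x0:ℂ) - (y0:ℂ) := by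
      linear_combination h + (((y0:ℂ) + (x0:ℂ)) + ((-1)*(y0:ℂ) + (-1)*(x0:ℂ))*om + ((-2))*om^2 + ((2) + (y0:ℂ) + (x0:ℂ))*om^3 + ((-2) + (-1)*(y0:ℂ))*om^4 + ((y0:ℂ) + (-1)*(x0:ℂ))*om^5 + ((x0:ℂ))*om^6 + ((-1)*(y0:ℂ))*om^7 + ((y0:ℂ))*om^8) * om_rel
    have h2 : ((9 * (cycNum γ 3 1 1 : ℤ) : ℤ) : ℂ) = (((p:ℤ) - 2 - x0 - y0 : ℤ) : ℂ) := by
      push_cast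
      linear_combination hC
    exact_mod_cast h2
  have Z02 : 9 * (cycNum γ 3 0 2 : ℤ) = (p:ℤ) - 2 - x0 - y0 := by
    have h := hsum9 0 2
    simp only [Finset.sum_range_succ, Finset.sum_range_zero, zero_add] at h
    rw [hT00, hT10, hT20, hT01, hT02, hT11, hT12, hT21, hT22] at h
    have hC : (9:ℂ) * (cycNum γ 3 0 2 : ℂ) = (p:ℂ) - 2 - (x0:ℂ) - (y0:ℂ) := by
      linear_combination h + (((-2) + (y0:ℂ) + (x0:ℂ)) + ((2) + (-1)*(y0:ℂ) + (-1)*(x0:ℂ))*om + ((-2) + (y0:ℂ) + (x0:ℂ))*om^3 + ((-1)*(y0:ℂ))*om^4 + ((2) + (y0:ℂ) + (-1)*(x0:ℂ))*om^5 + ((-2) + (x0:ℂ))*om^6 + ((-1)*(y0:ℂ))*om^7 + ((y0:ℂ))*om^8) * om_rel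
    have h2 : ((9 * (cycNum γ 3 0 2 : ℤ) : ℤ) : ℂ) = (((p:ℤ) - 2 - x0 - y0 : ℤ) : ℂ) := by
      push_cast
      linear_combination hC
    exact_mod_cast h2
  have Z20 : 9 * (cycNum γ 3 2 0 : ℤ) = (p:ℤ) - 2 - x0 - y0 := by
    have h := hsum9 2 0
    simp only [Finset.sum_range_succ, Finset.sum_range_zero, zero_add] at h
    rw [hT00, hT10, hT20, hT01, hT02, hT11, hT12, hT21, hT22] at h
    have hC : (9:ℂ) * (cycNum γ 3 2 0 : ℂ) = (p:ℂ) - 2 - (x0:ℂ) - (y0:ℂ) := by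
      linear_combination h + (((-2) + (y0:ℂ) + (x0:ℂ)) + ((2) + (-1)*(y0:ℂ) + (-1)*(x0:ℂ))*om + ((-2) + (y0:ℂ) + (x0:ℂ))*om^3 + ((-1)*(y0:ℂ))*om^4 + ((2) + (y0:ℂ) + (-1)*(x0:ℂ))*om^5 + ((-2) + (x0:ℂ))*om^6 + ((-1)*(y0:ℂ))*om^7 + ((y0:ℂ))*om^8) * om_rel
    have h2 : ((9 * (cycNum γ 3 2 0 : ℤ) : ℤ) : ℂ) = (((p:ℤ) - 2 - x0 - y0 : ℤ) : ℂ) := by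
      push_cast
      linear_combination hC
    exact_mod_cast h2
  have Z12 : 9 * (cycNum γ 3 1 2 : ℤ) = (p:ℤ) + 1 + (2*x0 - y0) := by
    have h := hsum9 1 2
    simp only [Finset.sum_range_succ, Finset.sum_range_zero, zero_add] at h
    rw [hT00, hT10, hT20, hT01, hT02, hT11, hT12, hT21, hT22] at h
    have hC : (9:ℂ) * (cycNum γ 3 1 2 : ℂ) = (p:ℂ) + 1 + (2*(x0:ℂ) - (y0:ℂ)) := by
      linear_combination h + (((-3) + (y0:ℂ) + (-2)*(x0:ℂ)) + ((3) + (-1)*(y0:ℂ) + (2)*(x0:ℂ))*om + ((-1))*om^2 + ((-2) + (y0:ℂ) + (-2)*(x0:ℂ))*om^3 + ((1) + (-1)*(y0:ℂ) + (2)*(x0:ℂ))*om^4 + ((1))*om^5 + ((-2) + (y0:ℂ) + (-1)*(x0:ℂ))*om^6 + ((1) + (x0:ℂ))*om^7 + ((-1) + (-1)*(y0:ℂ))*om^8 + ((y0:ℂ) + (-1)*(x0:ℂ))*om^9 + ((x0:ℂ))*om^10 + ((-1)*(y0:ℂ))*om^11 + ((y0:ℂ))*om^12) * om_rel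
    have h2 : ((9 * (cycNum γ 3 1 2 : ℤ) : ℤ) : ℂ) = (((p:ℤ) + 1 + (2*x0 - y0) : ℤ) : ℂ) := by
      push_cast
      linear_combination hC
    exact_mod_cast h2
  have Z21 : 9 * (cycNum γ 3 2 1 : ℤ) = (p:ℤ) + 1 + (2*x0 - y0) := by
    have h := hsum9 2 1
    simp only [Finset.sum_range_succ, Finset.sum_range_zero, zero_add] at h
    rw [hT00, hT10, hT20, hT01, hT02, hT11, hT12, hT21, hT22] at h
    have hC : (9:ℂ) * (cycNum γ 3 2 1 : ℂ) = (p:ℂ) + 1 + (2*(x0:ℂ) - (y0:ℂ)) := by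
      linear_combination h + (((-3) + (y0:ℂ) + (-2)*(x0:ℂ)) + ((3) + (-1)*(y0:ℂ) + (2)*(x0:ℂ))*om + ((-1))*om^2 + ((-2) + (y0:ℂ) + (-2)*(x0:ℂ))*om^3 + ((1) + (-1)*(y0:ℂ) + (2)*(x0:ℂ))*om^4 + ((1))*om^5 + ((-2) + (y0:ℂ) + (-1)*(x0:ℂ))*om^6 + ((1) + (x0:ℂ))*om^7 + ((-1) + (-1)*(y0:ℂ))*om^8 + ((y0:ℂ) + (-1)*(x0:ℂ))*om^9 + ((x0:ℂ))*om^10 + ((-1)*(y0:ℂ))*om^11 + ((y0:ℂ))*om^12) * om_rel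
    have h2 : ((9 * (cycNum γ 3 2 1 : ℤ) : ℤ) : ℂ) = (((p:ℤ) + 1 + (2*x0 - y0) : ℤ) : ℂ) := by
      push_cast
      linear_combination hC
    exact_mod_cast h2
  subst hx0 hy0
  refine ⟨3*d0 + 3*c0 - 2, d0 - c0, ?_, by omega, by omega, by omega, by omega, by omega,
    by omega, by omega, by omega, by omega, by omega⟩
  linear_combination (-4) * hnormZ
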